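/- Let X_j be a sequence of random vectors in ℝⁿ converging in total variation to X. Then for every bounded continuous f and every d > 0, sup_a E f(a + dX_j) → sup_a E f(a + dX). Consequently, if each (X_j, f) is reasonable then (X, f) is reasonable. -/

import Mathlib

open MeasureTheory Set Filter

/-- Bounded measurable functions integrate close against measures that are close in TV. -/
lemma key_lemma {α : Type*} [MeasurableSpace α] (μ ν : Measure α) [IsProbabilityMeasure μ]
    [IsProbabilityMeasure ν] (g : α → ℝ) (hg : Measurable g) (C : ℝ) (hC0 : 0 ≤ C)
    (hC : ∀ x, |g x| ≤ C) (ε : ℝ) (hε : 0 ≤ ε)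
    (h : ∀ A : Set α, MeasurableSet A → |(μ A).toReal - (ν A).toReal| ≤ ε) :
    |∫ x, g x ∂μ - ∫ x, g x ∂ν| ≤ 2 * C * ε := by
  set g' : α → ℝ := fun x => g x + C with hg'def
  have hg' : Measurable g' := hg.add_const C
  have h0 : ∀ x, 0 ≤ g' x := fun x => by have := abs_le.1 (hC x); simp [hg'def]; linarith
  have h2C : ∀ x, g' x ≤ 2 * C := fun x => by have := abs_le.1 (hC x); simp [hg'def]; linarith
  have hint : ∀ (κ : Measure α) [IsProbabilityMeasure κ], Integrable g' κ := by
    intro κ _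
    refine Integrable.mono' (integrable_const (2 * C)) hg'.aestronglyMeasurable ?_
    exact Eventually.of_forall fun x => by
      rw [Real.norm_eq_abs, abs_of_nonneg (h0 x)]; exact h2C x
  have hgint : ∀ (κ : Measure α) [IsProbabilityMeasure κ], Integrable g κ := by
    intro κ _
    refine Integrable.mono' (integrable_const C) hg.aestronglyMeasurable ?_
    exact Eventually.of_forall fun x => by rw [Real.norm_eq_abs]; exact hC x
  have shift : ∀ (κ : Measure α) [IsProbabilityMeasure κ],
      ∫ x, g' x ∂κ = ∫ x, g x ∂κ + C := by
    intro κ _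
    rw [hg'def]
    rw [integral_add (hgint κ) (integrable_const C), integral_const]
    simp
  have eq1 : ∫ x, g x ∂μ - ∫ x, g x ∂ν = ∫ x, g' x ∂μ - ∫ x, g' x ∂ν := by
    rw [shift μ, shift ν]; ring
  -- layer cake
  have lcμ := (hint μ).integral_eq_integral_Ioc_meas_le (M := 2 * C)
    (Eventually.of_forall h0) (Eventually.of_forall h2C)
  have lcν := (hint ν).integral_eq_integral_Ioc_meas_le (M := 2 * C)
    (Eventually.of_forall h0) (Eventually.of_forall h2C)
  have meas_set : ∀ t : ℝ, MeasurableSet {a : α | t ≤ g' a} := fun t =>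
    hg' measurableSet_Ici
  have anti : ∀ (κ : Measure α) [IsFiniteMeasure κ],
      Antitone (fun t : ℝ => (κ {a : α | t ≤ g' a}).toReal) := by
    intro κ _ s t hst
    exact ENNReal.toReal_mono (measure_ne_top κ _)
      (measure_mono fun a ha => le_trans hst ha)
  have intOn : ∀ (κ : Measure α) [IsProbabilityMeasure κ],
      IntegrableOn (fun t : ℝ => (κ {a : α | t ≤ g' a}).toReal) (Ioc 0 (2 * C)) := by
    intro κ _
    refine Integrable.mono' ((integrableOn_const (C := (1:ℝ)) measure_Ioc_lt_top.ne))
      ((anti κ).measurable.aestronglyMeasurable) ?_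
    refine Eventually.of_forall fun t => ?_
    rw [Real.norm_eq_abs, abs_of_nonneg ENNReal.toReal_nonneg]
    calc (κ {a : α | t ≤ g' a}).toReal ≤ (κ univ).toReal :=
          ENNReal.toReal_mono (measure_ne_top κ _) (measure_mono (subset_univ _))
      _ = 1 := by simp
  rw [eq1, lcμ, lcν]; simp only [measureReal_def]; rw [← integral_sub (intOn μ) (intOn ν)]
  have bound : ‖∫ t in Ioc 0 (2 * C), ((μ {a : α | t ≤ g' a}).toReal
      - (ν {a : α | t ≤ g' a}).toReal)‖ ≤ ε * (volume (Ioc 0 (2 * C))).toReal := by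
    refine norm_setIntegral_le_of_norm_le_const_ae' measure_Ioc_lt_top
      (Eventually.of_forall fun t ht => ?_)
    · rw [Real.norm_eq_abs]; exact h _ (meas_set t)
  rw [Real.norm_eq_abs] at bound
  calc |_| ≤ ε * (volume (Ioc 0 (2 * C))).toReal := bound
    _ ≤ 2 * C * ε := by
        rw [Real.volume_Ioc]
        rw [show (2 : ℝ) * C - 0 = 2 * C by ring, ENNReal.toReal_ofReal (by linarith)]
        linarith [mul_le_mul_of_nonneg_left (le_refl ε) (by linarith : (0:ℝ) ≤ 2 * C)]

lemma sup_close {ι : Type*} [Nonempty ι] (F G : ι → ℝ) (hF : BddAbove (range F))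
    (hG : BddAbove (range G)) (ε : ℝ) (h : ∀ a, |F a - G a| ≤ ε) :
    |(⨆ a, F a) - ⨆ a, G a| ≤ ε := by
  rw [abs_sub_le_iff]
  constructor
  · rw [sub_le_iff_le_add]
    refine ciSup_le fun a => ?_
    have := (abs_le.1 (h a)).2
    calc F a ≤ G a + ε := by linarith
      _ ≤ (⨆ a, G a) + ε := by gcongr; exact le_ciSup hG a
      _ = ε + ⨆ a, G a := by ring
  · rw [sub_le_iff_le_add]
    refine ciSup_le fun a => ?_
    have := (abs_le.1 (h a)).1
    calc G a ≤ F a + ε := by linarith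
      _ ≤ (⨆ a, F a) + ε := by gcongr; exact le_ciSup hF a
      _ = ε + ⨆ a, F a := by ring

/-- If random vectors `X_j` converge in total variation to `X`, then for every
bounded continuous `f` and every `d > 0`, `sup_a E f(a + dX_j) → sup_a E f(a + dX)`;
consequently, if each `(X_j, f)` is reasonable then `(X, f)` is reasonable. -/
theorem stmt18 {n : ℕ} {Ω : Type*} [MeasurableSpace Ω] (P : Measure Ω) [IsProbabilityMeasure P]
    (X : ℕ → Ω → (Fin n → ℝ)) (hX : ∀ j, Measurable (X j))
    (Xlim : Ω → (Fin n → ℝ)) (hXlim : Measurable Xlim)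
    (htv : ∀ ε : ℝ, 0 < ε → ∃ N : ℕ, ∀ j ≥ N, ∀ A : Set (Fin n → ℝ), MeasurableSet A →
      |((P.map (X j)) A).toReal - ((P.map Xlim) A).toReal| < ε)
    (f : (Fin n → ℝ) → ℝ) (hf : Continuous f) (hbdd : ∃ C : ℝ, ∀ x, |f x| ≤ C) :
    (∀ d : ℝ, 0 < d →
      Tendsto (fun j : ℕ => ⨆ a : Fin n → ℝ, ∫ ω, f (a + d • X j ω) ∂P) atTop
        (nhds (⨆ a : Fin n → ℝ, ∫ ω, f (a + d • Xlim ω) ∂P))) ∧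
    ((∀ j, AntitoneOn (fun d : ℝ => ⨆ a : Fin n → ℝ, ∫ ω, f (a + d • X j ω) ∂P) (Ioi 0)) →
      AntitoneOn (fun d : ℝ => ⨆ a : Fin n → ℝ, ∫ ω, f (a + d • Xlim ω) ∂P) (Ioi 0)) := by
  obtain ⟨C, hC⟩ := hbdd
  set C' : ℝ := max C 1 with hC'def
  have hC'pos : 0 < C' := lt_of_lt_of_le one_pos (le_max_right _ _)
  have hC' : ∀ x, |f x| ≤ C' := fun x => le_trans (hC x) (le_max_left _ _)
  have cont : ∀ (a : Fin n → ℝ) (d : ℝ), Continuous fun x : Fin n → ℝ => f (a + d • x) :=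
    fun a d => hf.comp (continuous_const.add (continuous_id.const_smul d))
  have hmap : ∀ (Y : Ω → (Fin n → ℝ)) (hY : Measurable Y) (a : Fin n → ℝ) (d : ℝ),
      ∫ ω, f (a + d • Y ω) ∂P = ∫ x, f (a + d • x) ∂(P.map Y) :=
    fun Y hY a d => (integral_map hY.aemeasurable (cont a d).aestronglyMeasurable).symm
  have instmap : ∀ (Y : Ω → (Fin n → ℝ)) (hY : Measurable Y),
      IsProbabilityMeasure (P.map Y) := fun Y hY => Measure.isProbabilityMeasure_map hY.aemeasurable
  have hbdd1 : ∀ (Y : Ω → (Fin n → ℝ)) (hY : Measurable Y) (d : ℝ),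
      BddAbove (range fun a : Fin n → ℝ => ∫ ω, f (a + d • Y ω) ∂P) := by
    intro Y hY d
    refine ⟨C', fun r ⟨a, ha⟩ => ?_⟩
    rw [← ha]
    calc ∫ ω, f (a + d • Y ω) ∂P ≤ |∫ ω, f (a + d • Y ω) ∂P| := le_abs_self _
      _ ≤ C' := by
        rw [← Real.norm_eq_abs]
        calc ‖∫ ω, f (a + d • Y ω) ∂P‖ ≤ C' * (P univ).toReal :=
              norm_integral_le_of_norm_le_const (Eventually.of_forall fun ω => by
                rw [Real.norm_eq_abs]; exact hC' _)
          _ = C' := by simp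
  have main : ∀ d : ℝ, 0 < d →
      Tendsto (fun j : ℕ => ⨆ a : Fin n → ℝ, ∫ ω, f (a + d • X j ω) ∂P) atTop
        (nhds (⨆ a : Fin n → ℝ, ∫ ω, f (a + d • Xlim ω) ∂P)) := by
    intro d hd
    rw [Metric.tendsto_atTop]
    intro ε hε
    obtain ⟨N, hN⟩ := htv (ε / (4 * C')) (by positivity)
    refine ⟨N, fun j hj => ?_⟩
    rw [Real.dist_eq]
    have key : ∀ a : Fin n → ℝ,
        |(∫ ω, f (a + d • X j ω) ∂P) - ∫ ω, f (a + d • Xlim ω) ∂P| ≤ 2 * C' * (ε / (4 * C')) := by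
      intro a
      rw [hmap (X j) (hX j) a d, hmap Xlim hXlim a d]
      have := instmap (X j) (hX j)
      have := instmap Xlim hXlim
      exact key_lemma (P.map (X j)) (P.map Xlim) (fun x => f (a + d • x))
        (cont a d).measurable C' hC'pos.le (fun x => hC' _) (ε / (4 * C')) (by positivity)
        (fun A hA => (hN j hj A hA).le)
    have hsup := sup_close _ _ (hbdd1 (X j) (hX j) d) (hbdd1 Xlim hXlim d) _ key
    calc |(⨆ a : Fin n → ℝ, ∫ ω, f (a + d • X j ω) ∂P)
          - ⨆ a : Fin n → ℝ, ∫ ω, f (a + d • Xlim ω) ∂P| ≤ 2 * C' * (ε / (4 * C')) := hsup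
      _ = ε / 2 := by field_simp; ring
      _ < ε := by linarith
  refine ⟨main, fun hanti d1 hd1 d2 hd2 hle => ?_⟩
  exact le_of_tendsto_of_tendsto' (main d2 hd2) (main d1 hd1)
    (fun j => hanti j hd1 hd2 hle)
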